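/- arXiv:1711.07339 — 2 statements merged into one kernel-verified Lean document; each statement's English description precedes it below -/
import Mathlib

section
/- The odd-indexed part of the Mittag-Leffler series with parameter 1/2 satisfies: for all real z, ∑_{n=0}^∞ z^{2n+1}/Γ(n + 3/2) = exp(z²)·erf(z). -/
open Real

/-- Error function. -/
noncomputable def erf (z : ℝ) : ℝ := (2 / Real.sqrt π) * ∫ t in (0:ℝ)..z, Real.exp (-t ^ 2)

namespace MLHalfAux

noncomputable def S (z : ℝ) : ℝ := ∑' n : ℕ, z ^ (2 * n + 1) / Real.Gamma (n + 3/2)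

lemma gamma32_pos (n : ℕ) : 0 < Real.Gamma ((n : ℝ) + 3/2) :=
  Real.Gamma_pos_of_pos (by positivity)

lemma gamma12_pos (n : ℕ) : 0 < Real.Gamma ((n : ℝ) + 1/2) :=
  Real.Gamma_pos_of_pos (by positivity)

lemma gamma_rec (n : ℕ) :
    Real.Gamma ((n : ℝ) + 3/2) = ((n : ℝ) + 1/2) * Real.Gamma ((n : ℝ) + 1/2) := by
  rw [show (n : ℝ) + 3/2 = ((n : ℝ) + 1/2) + 1 by ring,
    Real.Gamma_add_one (by positivity)]

lemma summable_aux (r : ℝ) :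
    Summable (fun n : ℕ => r ^ n / Real.Gamma ((n : ℝ) + 1/2)) := by
  rw [← summable_nat_add_iff 2]
  have h0 := Real.summable_pow_div_factorial |r|
  have h1 := (summable_nat_add_iff 1).mpr h0
  have h2 : Summable (fun n : ℕ => |r| ^ (n + 2) / (Nat.factorial (n + 1) : ℝ)) := by
    refine (h1.mul_left |r|).congr fun n => ?_
    rw [pow_succ]
    ring
  apply Summable.of_norm
  refine Summable.of_nonneg_of_le (fun n => norm_nonneg _) (fun n => ?_) h2
  have hfac : ((Nat.factorial (n + 1) : ℕ) : ℝ) ≤ Real.Gamma ((n : ℝ) + 2 + 1/2) := by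
    have heq : ((Nat.factorial (n + 1) : ℕ) : ℝ) = Real.Gamma (((n + 1 : ℕ) : ℝ) + 1) := by
      rw [Real.Gamma_nat_eq_factorial]
    rw [heq]
    have h2mem : ((n + 1 : ℕ) : ℝ) + 1 ∈ Set.Ici (2 : ℝ) := by
      simp only [Set.mem_Ici]; push_cast; linarith [Nat.cast_nonneg (α := ℝ) n]
    have h2mem' : (n : ℝ) + 2 + 1/2 ∈ Set.Ici (2 : ℝ) := by
      simp only [Set.mem_Ici]; linarith [Nat.cast_nonneg (α := ℝ) n]
    refine Real.Gamma_strictMonoOn_Ici.monotoneOn h2mem h2mem' ?_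
    push_cast; linarith
  have hG : 0 < Real.Gamma ((n : ℝ) + 2 + 1/2) :=
    Real.Gamma_pos_of_pos (by positivity)
  have hcast : ((n + 2 : ℕ) : ℝ) + 1/2 = (n : ℝ) + 2 + 1/2 := by push_cast; ring
  rw [hcast, norm_div, norm_pow, Real.norm_eq_abs, Real.norm_eq_abs, abs_of_pos hG]
  gcongr

lemma deriv_series_eq (y : ℝ) :
    ∑' n : ℕ, ((2 * n + 1 : ℕ) : ℝ) * y ^ (2 * n) / Real.Gamma ((n : ℝ) + 3/2)
      = 2 * y * S y + 2 / Real.sqrt π := by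
  have h1 : ∀ n : ℕ, ((2 * n + 1 : ℕ) : ℝ) * y ^ (2 * n) / Real.Gamma ((n : ℝ) + 3/2)
      = 2 * ((y ^ 2) ^ n / Real.Gamma ((n : ℝ) + 1/2)) := by
    intro n
    rw [gamma_rec, ← pow_mul]
    have h12 : ((n : ℝ) + 1/2) ≠ 0 := by positivity
    have hG : Real.Gamma ((n : ℝ) + 1/2) ≠ 0 := (gamma12_pos n).ne'
    push_cast
    field_simp
  rw [tsum_congr h1]
  rw [Summable.tsum_eq_zero_add ((summable_aux (y ^ 2)).mul_left 2)]
  have h2 : ∀ n : ℕ, 2 * ((y ^ 2) ^ (n + 1) / Real.Gamma (((n + 1 : ℕ) : ℝ) + 1/2))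
      = 2 * y * (y ^ (2 * n + 1) / Real.Gamma ((n : ℝ) + 3/2)) := by
    intro n
    rw [show (((n + 1 : ℕ) : ℝ) + 1/2) = (n : ℝ) + 3/2 by push_cast; ring,
      show (y ^ 2) ^ (n + 1) = y * y ^ (2 * n + 1) by rw [← pow_mul]; ring]
    ring
  rw [tsum_congr h2, tsum_mul_left]
  simp only [pow_zero, Nat.cast_zero, mul_one]
  rw [show ((0 : ℝ) + 1/2) = (1/2 : ℝ) by ring, Real.Gamma_one_half_eq]
  unfold S
  ring

lemma hasDerivAt_S (y : ℝ) :
    HasDerivAt S (2 * y * S y + 2 / Real.sqrt π) y := by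
  set R : ℝ := |y| + 1 with hR
  have hRpos : 0 < R := by positivity
  have key : HasDerivAt S
      (∑' n : ℕ, ((2 * n + 1 : ℕ) : ℝ) * y ^ (2 * n) / Real.Gamma ((n : ℝ) + 3/2)) y := by
    unfold S
    apply hasDerivAt_tsum_of_isPreconnected
      (g := fun (n : ℕ) (z : ℝ) => z ^ (2 * n + 1) / Real.Gamma ((n : ℝ) + 3/2))
      (g' := fun (n : ℕ) (x : ℝ) => ((2 * n + 1 : ℕ) : ℝ) * x ^ (2 * n) / Real.Gamma ((n : ℝ) + 3/2))
      (u := fun n : ℕ => ((2 * n + 1 : ℕ) : ℝ) * (R ^ 2) ^ n / Real.Gamma ((n : ℝ) + 3/2))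
      (t := Metric.ball (0 : ℝ) R) (y₀ := (0 : ℝ))
    · -- summability of u
      refine ((summable_aux (R ^ 2)).mul_left 2).congr fun n => ?_
      rw [gamma_rec]
      have h12 : ((n : ℝ) + 1/2) ≠ 0 := by positivity
      have hG : Real.Gamma ((n : ℝ) + 1/2) ≠ 0 := (gamma12_pos n).ne'
      push_cast
      field_simp
    · exact Metric.isOpen_ball
    · exact (convex_ball _ _).isPreconnected
    · intro n x _
      simpa using (hasDerivAt_pow (2 * n + 1) x).div_const (Real.Gamma ((n : ℝ) + 3/2))
    · intro n x hx
      have hxR : |x| ≤ R := le_of_lt (by simpa [Real.dist_eq] using hx)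
      rw [Real.norm_eq_abs, abs_div, abs_mul, abs_of_pos (gamma32_pos n),
        abs_of_nonneg (by positivity : (0:ℝ) ≤ ((2 * n + 1 : ℕ) : ℝ))]
      gcongr
      calc |x ^ (2 * n)| = (|x| ^ 2) ^ n := by
            rw [abs_pow, ← pow_mul]
        _ ≤ (R ^ 2) ^ n := by gcongr
    · simp [hRpos, abs_of_pos hRpos]
    · refine summable_zero.congr fun n => ?_
      rw [zero_pow (by omega), zero_div]
    · simp only [Metric.mem_ball, dist_zero_right, Real.norm_eq_abs, hR]
      linarith
  rwa [deriv_series_eq] at key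

end MLHalfAux

theorem odd_part_mittagLeffler_half (z : ℝ) :
    ∑' n : ℕ, z ^ (2 * n + 1) / Real.Gamma (n + 3/2) = Real.exp (z ^ 2) * erf z := by
  have hg : ∀ t : ℝ, HasDerivAt (fun x => Real.exp (-x ^ 2) * MLHalfAux.S x)
      (2 / Real.sqrt π * Real.exp (-t ^ 2)) t := by
    intro t
    have h1 : HasDerivAt (fun x : ℝ => Real.exp (-x ^ 2))
        (Real.exp (-t ^ 2) * (-(2 * t))) t := by
      have := ((hasDerivAt_pow 2 t).neg).exp
      simpa using this
    have h2 := MLHalfAux.hasDerivAt_S t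
    have h3 : HasDerivAt (fun x => Real.exp (-x ^ 2) * MLHalfAux.S x)
        (Real.exp (-t ^ 2) * (-(2 * t)) * MLHalfAux.S t
          + Real.exp (-t ^ 2) * (2 * t * MLHalfAux.S t + 2 / Real.sqrt π)) t := h1.mul h2
    convert h3 using 1
    ring
  have hS0 : MLHalfAux.S 0 = 0 := by
    unfold MLHalfAux.S
    rw [show (fun n : ℕ => (0:ℝ) ^ (2 * n + 1) / Real.Gamma ((n:ℝ) + 3/2)) = fun _ => 0 from
      funext fun n => by rw [zero_pow (by omega), zero_div]]
    exact tsum_zero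
  have hint : ∫ t in (0:ℝ)..z, (2 / Real.sqrt π * Real.exp (-t ^ 2))
      = Real.exp (-z ^ 2) * MLHalfAux.S z - Real.exp (-(0:ℝ) ^ 2) * MLHalfAux.S 0 := by
    refine intervalIntegral.integral_eq_sub_of_hasDerivAt (fun t _ => hg t) ?_
    exact (Continuous.intervalIntegrable (by continuity) _ _)
  rw [hS0, mul_zero, sub_zero] at hint
  have herf : erf z = Real.exp (-z ^ 2) * MLHalfAux.S z := by
    rw [erf, ← hint, intervalIntegral.integral_const_mul]
  have : Real.exp (z ^ 2) * erf z = MLHalfAux.S z := by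
    rw [herf, ← mul_assoc, ← Real.exp_add]
    simp
  rw [this]
  rfl
end

section
/- Equivalence of the Cauchy problem with a Volterra-type equation (sufficiency direction): Let 0 < α ≤ 1, γ = α + β(1−α) with 0 ≤ β ≤ 1, ψ increasing C¹ with ψ' > 0, and g : [a,T] → ℝ continuous. If y(t) = (ψ(t)−ψ(a))^{γ−1}/Γ(γ)·y_a + (1/Γ(α))∫_a^t ψ'(s)(ψ(t)−ψ(s))^{α−1} g(s) ds, then the limit of (ψ(t)−ψ(a))^{1−γ}y(t) as t → a⁺ equals y_a/Γ(γ); i.e., the weighted initial condition I^{1−γ;ψ}_{a+}y(a) = y_a is satisfied in the sense that (ψ(t)−ψ(a))^{1−γ}y(t) → y_a/Γ(γ). -/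
open Real Filter

theorem volterra_weighted_initial_condition
    (a T α β γ y_a : ℝ) (haT : a < T)
    (hα : 0 < α) (hα1 : α ≤ 1) (hβ : 0 ≤ β) (hβ1 : β ≤ 1)
    (hγ : γ = α + β * (1 - α))
    (ψ : ℝ → ℝ) (hψ : ContDiffOn ℝ 1 ψ (Set.Icc a T))
    (hψm : StrictMonoOn ψ (Set.Icc a T))
    (hψ' : ∀ s ∈ Set.Icc a T, 0 < deriv ψ s)
    (g : ℝ → ℝ) (hg : ContinuousOn g (Set.Icc a T))
    (y : ℝ → ℝ)
    (hy : ∀ t ∈ Set.Ioc a T, y t =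
      (ψ t - ψ a) ^ (γ - 1) / Real.Gamma γ * y_a +
        (1 / Real.Gamma α) * ∫ s in a..t, deriv ψ s * (ψ t - ψ s) ^ (α - 1) * g s) :
    Tendsto (fun t => (ψ t - ψ a) ^ (1 - γ) * y t) (nhdsWithin a (Set.Ioi a))
      (nhds (y_a / Real.Gamma γ)) := by
  have hγ1 : γ ≤ 1 := by nlinarith
  have hγ0 : 0 < γ := by nlinarith
  have hαγ : 0 < α + 1 - γ := by linarith
  have hΓα : 0 < Real.Gamma α := Real.Gamma_pos_of_pos hα
  have hΓγ : 0 < Real.Gamma γ := Real.Gamma_pos_of_pos hγ0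
  have hUD : UniqueDiffOn ℝ (Set.Icc a T) := uniqueDiffOn_Icc haT
  set D : ℝ → ℝ := derivWithin ψ (Set.Icc a T) with hDdef
  have hDc : ContinuousOn D (Set.Icc a T) := hψ.continuousOn_derivWithin hUD le_rfl
  have hDpos : ∀ x ∈ Set.Icc a T, 0 < D x := by
    intro x hx
    by_cases hda : DifferentiableAt ℝ ψ x
    · rw [hDdef, hda.derivWithin (hUD x hx)]; exact hψ' x hx
    · have := hψ' x hx
      rw [deriv_zero_of_not_differentiableAt hda] at this
      exact absurd this (lt_irrefl 0)
  have hDeq : ∀ x ∈ Set.Ioo a T, D x = deriv ψ x := fun x hx =>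
    derivWithin_of_mem_nhds (Icc_mem_nhds hx.1 hx.2)
  have hderiv : ∀ x ∈ Set.Ioo a T, HasDerivAt ψ (D x) x := by
    intro x hx
    have hnh : Set.Icc a T ∈ nhds x := Icc_mem_nhds hx.1 hx.2
    have hda : DifferentiableAt ℝ ψ x :=
      ((hψ.differentiableOn one_ne_zero) x (Set.Ioo_subset_Icc_self hx)).differentiableAt hnh
    rw [hDeq x hx]; exact hda.hasDerivAt
  -- min and max of D
  obtain ⟨x₁, hx₁, hmin⟩ := isCompact_Icc.exists_isMinOn (Set.nonempty_Icc.2 haT.le) hDc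
  obtain ⟨x₂, hx₂, hmax⟩ := isCompact_Icc.exists_isMaxOn (Set.nonempty_Icc.2 haT.le) hDc
  set m : ℝ := D x₁ with hmdef
  set M : ℝ := D x₂ with hMdef
  have hm : 0 < m := hDpos x₁ hx₁
  have hmle : ∀ x ∈ Set.Icc a T, m ≤ D x := fun x hx => hmin hx
  have hMle : ∀ x ∈ Set.Icc a T, D x ≤ M := fun x hx => hmax hx
  have hM : 0 < M := lt_of_lt_of_le hm (hmle x₂ hx₂)
  obtain ⟨Mg, hMg⟩ := isCompact_Icc.exists_bound_of_continuousOn hg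
  have hMg0 : 0 ≤ Mg := le_trans (norm_nonneg (g a)) (hMg a ⟨le_refl a, haT.le⟩)
  -- mean value bounds
  have hMVT : ∀ s t : ℝ, a ≤ s → s < t → t ≤ T →
      m * (t - s) ≤ ψ t - ψ s ∧ ψ t - ψ s ≤ M * (t - s) := by
    intro s t hs hst ht
    obtain ⟨c, hc, hceq⟩ := exists_hasDerivAt_eq_slope ψ D hst
      (hψ.continuousOn.mono (Set.Icc_subset_Icc hs ht))
      (fun x hx => hderiv x ⟨lt_of_le_of_lt hs hx.1, lt_of_lt_of_le hx.2 ht⟩)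
    have hcT : c ∈ Set.Icc a T := ⟨le_trans hs hc.1.le, le_trans hc.2.le ht⟩
    have h1 : ψ t - ψ s = D c * (t - s) := by
      rw [hceq, div_mul_cancel₀ _ (sub_ne_zero.2 hst.ne')]
    have h2 := hmle c hcT
    have h3 := hMle c hcT
    constructor <;> nlinarith [sub_pos.2 hst]
  set C : ℝ := M * (m ^ (α - 1) * Mg) with hCdef
  have hC0 : 0 ≤ C := by positivity
  set K : ℝ := M ^ (1 - γ) * (1 / Real.Gamma α * (C / α)) with hKdef
  -- key bound
  have hbd : ∀ t ∈ Set.Ioc a T,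
      |(ψ t - ψ a) ^ (1 - γ) *
        (1 / Real.Gamma α * ∫ s in a..t, deriv ψ s * (ψ t - ψ s) ^ (α - 1) * g s)| ≤
      K * (t - a) ^ (α + 1 - γ) := by
    intro t ht
    have hat : a < t := ht.1
    have htT : t ≤ T := ht.2
    have hu : 0 < t - a := sub_pos.2 hat
    obtain ⟨hxl, hxu⟩ := hMVT a t le_rfl hat htT
    have hx : 0 < ψ t - ψ a := lt_of_lt_of_le (by positivity) hxl
    -- a.e. bound on the integrand
    have hne : ∀ᵐ s : ℝ, s ≠ t := by
      rw [MeasureTheory.ae_iff]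
      simp only [not_not, Set.setOf_eq_eq_singleton]
      exact Real.volume_singleton
    have hae : ∀ᵐ s ∂(MeasureTheory.volume.restrict (Set.uIoc a t)),
        ‖deriv ψ s * (ψ t - ψ s) ^ (α - 1) * g s‖ ≤ C * (t - s) ^ (α - 1) := by
      rw [Set.uIoc_of_le hat.le]
      filter_upwards [MeasureTheory.ae_restrict_mem measurableSet_Ioc,
        MeasureTheory.ae_restrict_of_ae hne] with s hs hst
      have hso : s ∈ Set.Ioo a t := ⟨hs.1, lt_of_le_of_ne hs.2 hst⟩
      have hsT : s ∈ Set.Ioo a T := ⟨hso.1, lt_of_lt_of_le hso.2 htT⟩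
      have hsI : s ∈ Set.Icc a T := ⟨hsT.1.le, hsT.2.le⟩
      have hds : deriv ψ s = D s := (hDeq s hsT).symm
      have e1 : |deriv ψ s| ≤ M := by
        rw [hds, abs_of_pos (hDpos s hsI)]; exact hMle s hsI
      have hts : 0 < t - s := sub_pos.2 hso.2
      obtain ⟨hl, _⟩ := hMVT s t hso.1.le hso.2 htT
      have hpos2 : 0 < ψ t - ψ s := lt_of_lt_of_le (by positivity) hl
      have e2 : |(ψ t - ψ s) ^ (α - 1)| ≤ m ^ (α - 1) * (t - s) ^ (α - 1) := by
        rw [abs_of_nonneg (Real.rpow_nonneg hpos2.le _)]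
        calc (ψ t - ψ s) ^ (α - 1) ≤ (m * (t - s)) ^ (α - 1) :=
              Real.rpow_le_rpow_of_nonpos (by positivity) hl (by linarith)
          _ = m ^ (α - 1) * (t - s) ^ (α - 1) := Real.mul_rpow hm.le hts.le
      have e3 : |g s| ≤ Mg := hMg s hsI
      have h2 : 0 ≤ (t - s) ^ (α - 1) := Real.rpow_nonneg hts.le _
      rw [Real.norm_eq_abs, abs_mul, abs_mul]
      calc |deriv ψ s| * |(ψ t - ψ s) ^ (α - 1)| * |g s|
          ≤ M * (m ^ (α - 1) * (t - s) ^ (α - 1)) * Mg :=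
            mul_le_mul (mul_le_mul e1 e2 (abs_nonneg _) hM.le) e3 (abs_nonneg _)
              (by positivity)
        _ = C * (t - s) ^ (α - 1) := by rw [hCdef]; ring
    -- integrability of the bound
    have hBint : IntervalIntegrable (fun s => C * (t - s) ^ (α - 1))
        MeasureTheory.volume a t := by
      have h1 := (intervalIntegral.intervalIntegrable_rpow' (a := 0) (b := t - a)
        (show (-1 : ℝ) < α - 1 by linarith)).comp_sub_left t
      simp only [sub_zero, sub_sub_cancel] at h1
      exact (h1.symm).const_mul C
    have hbound := intervalIntegral.norm_integral_le_abs_of_norm_le hae hBint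
    -- compute the integral of the bound
    have hval : (∫ s in a..t, C * (t - s) ^ (α - 1)) = C * ((t - a) ^ α / α) := by
      rw [intervalIntegral.integral_const_mul]
      have h2 := intervalIntegral.integral_comp_sub_left (a := a) (b := t)
        (fun x : ℝ => x ^ (α - 1)) t
      simp only [sub_self] at h2
      rw [h2, integral_rpow (Or.inl (show (-1 : ℝ) < α - 1 by linarith))]
      rw [sub_add_cancel, Real.zero_rpow hα.ne', sub_zero]
    have hJ : |∫ s in a..t, deriv ψ s * (ψ t - ψ s) ^ (α - 1) * g s| ≤
        C * ((t - a) ^ α / α) := by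
      have : |C * ((t - a) ^ α / α)| = C * ((t - a) ^ α / α) := by
        rw [abs_of_nonneg]; positivity
      calc |∫ s in a..t, deriv ψ s * (ψ t - ψ s) ^ (α - 1) * g s|
          ≤ |∫ s in a..t, C * (t - s) ^ (α - 1)| := hbound
        _ = C * ((t - a) ^ α / α) := by rw [hval, this]
    -- assemble
    have hA : (ψ t - ψ a) ^ (1 - γ) ≤ M ^ (1 - γ) * (t - a) ^ (1 - γ) := by
      calc (ψ t - ψ a) ^ (1 - γ) ≤ (M * (t - a)) ^ (1 - γ) :=
            Real.rpow_le_rpow hx.le hxu (by linarith)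
        _ = M ^ (1 - γ) * (t - a) ^ (1 - γ) := Real.mul_rpow hM.le hu.le
    rw [abs_mul, abs_mul, abs_of_nonneg (Real.rpow_nonneg hx.le _),
      abs_of_nonneg (by positivity : (0:ℝ) ≤ 1 / Real.Gamma α)]
    have hfin : (ψ t - ψ a) ^ (1 - γ) *
        (1 / Real.Gamma α * |∫ s in a..t, deriv ψ s * (ψ t - ψ s) ^ (α - 1) * g s|) ≤
        M ^ (1 - γ) * (t - a) ^ (1 - γ) *
          (1 / Real.Gamma α * (C * ((t - a) ^ α / α))) :=
      mul_le_mul hA (mul_le_mul_of_nonneg_left hJ (by positivity))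
        (by positivity) (by positivity)
    refine hfin.trans (le_of_eq ?_)
    have hupow : (t - a) ^ (1 - γ) * (t - a) ^ α = (t - a) ^ (α + 1 - γ) := by
      rw [← Real.rpow_add hu]; congr 1; ring
    rw [hKdef, ← hupow]; ring
  -- eventual equality
  have hev : Set.Ioc a T ∈ nhdsWithin a (Set.Ioi a) :=
    Ioc_mem_nhdsGT_of_mem ⟨le_refl a, haT⟩
  have heq : ∀ᶠ t in nhdsWithin a (Set.Ioi a),
      y_a / Real.Gamma γ + (ψ t - ψ a) ^ (1 - γ) *
        (1 / Real.Gamma α * ∫ s in a..t, deriv ψ s * (ψ t - ψ s) ^ (α - 1) * g s) =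
      (ψ t - ψ a) ^ (1 - γ) * y t := by
    filter_upwards [hev] with t ht
    have hx : 0 < ψ t - ψ a :=
      sub_pos.2 (hψm ⟨le_refl a, haT.le⟩ ⟨ht.1.le, ht.2⟩ ht.1)
    rw [hy t ht]
    have h1 : (ψ t - ψ a) ^ (1 - γ) * (ψ t - ψ a) ^ (γ - 1) = 1 := by
      rw [← Real.rpow_add hx, show (1 - γ) + (γ - 1) = 0 by ring, Real.rpow_zero]
    rw [mul_add]
    congr 1
    linear_combination (-(y_a / Real.Gamma γ)) * h1
  -- the small term tends to zero
  have h0 : Tendsto (fun t => (ψ t - ψ a) ^ (1 - γ) *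
      (1 / Real.Gamma α * ∫ s in a..t, deriv ψ s * (ψ t - ψ s) ^ (α - 1) * g s))
      (nhdsWithin a (Set.Ioi a)) (nhds 0) := by
    apply squeeze_zero_norm' (a := fun t => K * (t - a) ^ (α + 1 - γ))
    · filter_upwards [hev] with t ht using hbd t ht
    · have h1 : Tendsto (fun t : ℝ => t - a) (nhdsWithin a (Set.Ioi a)) (nhds 0) := by
        have h1' : Tendsto (fun t : ℝ => t - a) (nhds a) (nhds (a - a)) :=
          (continuous_id.sub continuous_const).tendsto a
        rw [sub_self] at h1'
        exact h1'.mono_left nhdsWithin_le_nhds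
      have h2 : Tendsto (fun u : ℝ => u ^ (α + 1 - γ)) (nhds 0) (nhds 0) := by
        have := (Real.continuousAt_rpow_const 0 (α + 1 - γ) (Or.inr hαγ.le)).tendsto
        rwa [Real.zero_rpow hαγ.ne'] at this
      have := (h2.comp h1).const_mul K
      simpa using this
  have := (tendsto_const_nhds (x := y_a / Real.Gamma γ)
    (f := nhdsWithin a (Set.Ioi a))).add h0
  rw [add_zero] at this
  exact this.congr' heq
end
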